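/- Let Δ be a uniformly distributed random variable on Fin K and, for j ∈ {1,…,l+1} with l + 1 ≤ K, let W_j^{(K)} = 1 if Δ = j and W_j^{(K)} = 0 otherwise. Then for every fixed l ∈ ℕ, lim_{K→∞} I(W_{l+1}^{(K)}; (W_1^{(K)}, …, W_l^{(K)})) / H2(1/K) = 0, where the limit is over natural numbers K → ∞. -/

import Mathlib

open MeasureTheory Real Filter

/-- Shannon entropy (in nats) of a random variable `X` with values in a finite type:
`H(X) = ∑ₓ negMulLog (P(X = x))`. -/
noncomputable def entropy {Ω : Type*} [MeasurableSpace Ω] (P : Measure Ω)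
    {α : Type*} [Fintype α] (X : Ω → α) : ℝ :=
  ∑ x : α, Real.negMulLog (P (X ⁻¹' {x})).toReal

/-- Mutual information `I(X ; Y) = H(X) + H(Y) - H((X,Y))`. -/
noncomputable def mutualInfo {Ω : Type*} [MeasurableSpace Ω] (P : Measure Ω)
    {α β : Type*} [Fintype α] [Fintype β] (X : Ω → α) (Y : Ω → β) : ℝ :=
  entropy P X + entropy P Y - entropy P (fun ω => (X ω, Y ω))

section Helpers

lemma measure_preimage_finset {Ω : Type*} [MeasurableSpace Ω] (P : Measure Ω)
    [IsProbabilityMeasure P] {K : ℕ} (hK : K ≠ 0) (Δ : Ω → Fin K)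
    (hunif : ∀ x : Fin K, P (Δ ⁻¹' {x}) = (K : ENNReal)⁻¹)
    (S : Finset (Fin K)) :
    P (Δ ⁻¹' ↑S) = S.card * (K : ENNReal)⁻¹ := by
  have hKne : (K : ENNReal) ≠ 0 := by exact_mod_cast hK
  have hKtop : (K : ENNReal) ≠ ⊤ := ENNReal.natCast_ne_top K
  have hinvtop : (K : ENNReal)⁻¹ ≠ ⊤ := ENNReal.inv_ne_top.2 hKne
  have hub : ∀ T : Finset (Fin K), P (Δ ⁻¹' ↑T) ≤ T.card * (K : ENNReal)⁻¹ := by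
    intro T
    have h1 : Δ ⁻¹' ↑T = ⋃ i ∈ T, Δ ⁻¹' {i} := by ext ω; simp
    rw [h1]
    refine le_trans (measure_biUnion_finset_le T _) ?_
    simp [hunif, Finset.sum_const, mul_comm]
  refine le_antisymm (hub S) ?_
  have hcards : (S.card : ENNReal) * (K : ENNReal)⁻¹ + (Sᶜ.card : ENNReal) * (K : ENNReal)⁻¹ = 1 := by
    rw [← add_mul]
    have h : S.card + Sᶜ.card = K := by simpa using Finset.card_add_card_compl S
    have h2 : (S.card : ENNReal) + (Sᶜ.card : ENNReal) = (K : ENNReal) := by exact_mod_cast h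
    rw [h2, ENNReal.mul_inv_cancel hKne hKtop]
  have hcover : (1 : ENNReal) ≤ P (Δ ⁻¹' ↑S) + (Sᶜ.card : ENNReal) * (K : ENNReal)⁻¹ := by
    have huniv : (Set.univ : Set Ω) = Δ ⁻¹' ↑S ∪ Δ ⁻¹' ↑(Sᶜ) := by
      ext ω; simp [← Set.preimage_union]
    calc (1 : ENNReal) = P Set.univ := (measure_univ).symm
      _ = P (Δ ⁻¹' ↑S ∪ Δ ⁻¹' ↑(Sᶜ)) := by rw [← huniv]
      _ ≤ P (Δ ⁻¹' ↑S) + P (Δ ⁻¹' ↑(Sᶜ)) := measure_union_le _ _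
      _ ≤ P (Δ ⁻¹' ↑S) + (Sᶜ.card : ENNReal) * (K : ENNReal)⁻¹ := by
          exact add_le_add_right (hub Sᶜ) _
  have := hcover
  rw [← hcards] at this
  exact ENNReal.le_of_add_le_add_right
    (ENNReal.mul_ne_top (ENNReal.natCast_ne_top _) hinvtop) this

lemma entropy_comp {Ω : Type*} [MeasurableSpace Ω] (P : Measure Ω)
    [IsProbabilityMeasure P] {K : ℕ} (hK : K ≠ 0) (Δ : Ω → Fin K)
    (hunif : ∀ x : Fin K, P (Δ ⁻¹' {x}) = (K : ENNReal)⁻¹)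
    {α : Type*} [Fintype α] [DecidableEq α] (f : Fin K → α) :
    entropy P (fun ω => f (Δ ω)) =
      ∑ x : α, Real.negMulLog (((Finset.univ.filter (fun i => f i = x)).card : ℝ) / (K : ℝ)) := by
  unfold entropy
  refine Finset.sum_congr rfl fun x _ => ?_
  have h1 : (fun ω => f (Δ ω)) ⁻¹' {x} = Δ ⁻¹' ↑(Finset.univ.filter fun i => f i = x) := by
    ext ω; simp
  rw [h1, measure_preimage_finset P hK Δ hunif]
  congr 1
  rw [ENNReal.toReal_mul, ENNReal.toReal_inv]
  simp [div_eq_mul_inv]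

lemma entropy_comp_injective {Ω : Type*} [MeasurableSpace Ω] (P : Measure Ω)
    {α β : Type*} [Fintype α] [Fintype β] [DecidableEq α] (Z : Ω → β) (ψ : β → α)
    (hψ : Function.Injective ψ) :
    entropy P (fun ω => ψ (Z ω)) = entropy P Z := by
  unfold entropy
  have hpre : ∀ x : α, (fun ω => ψ (Z ω)) ⁻¹' {x} = Z ⁻¹' (ψ ⁻¹' {x}) := fun x => rfl
  calc ∑ x : α, Real.negMulLog (P ((fun ω => ψ (Z ω)) ⁻¹' {x})).toReal
      = ∑ x ∈ Finset.univ.image ψ, Real.negMulLog (P ((fun ω => ψ (Z ω)) ⁻¹' {x})).toReal := by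
        refine (Finset.sum_subset (Finset.subset_univ _) ?_).symm
        intro x _ hx
        have : ψ ⁻¹' {x} = ∅ := by
          ext y; simp only [Set.mem_preimage, Set.mem_singleton_iff, Set.mem_empty_iff_false,
            iff_false]
          intro h; exact hx (Finset.mem_image.2 ⟨y, Finset.mem_univ _, h⟩)
        rw [hpre, this]
        simp
    _ = ∑ y : β, Real.negMulLog (P ((fun ω => ψ (Z ω)) ⁻¹' {ψ y})).toReal := by
        exact Finset.sum_image (fun a _ b _ h => hψ h)
    _ = ∑ y : β, Real.negMulLog (P (Z ⁻¹' {y})).toReal := by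
        refine Finset.sum_congr rfl fun y _ => ?_
        have : ψ ⁻¹' {ψ y} = {y} := by ext z; simp [hψ.eq_iff]
        rw [hpre, this]


def truncMin (m : ℕ) {K : ℕ} (i : Fin K) : Fin (m + 1) :=
  ⟨min i m, Nat.lt_succ_of_le (min_le_right _ _)⟩

lemma filter_coe_eq_card {K n : ℕ} (h : n < K) :
    (Finset.univ.filter (fun i : Fin K => (i : ℕ) = n)).card = 1 := by
  rw [show (Finset.univ.filter (fun i : Fin K => (i : ℕ) = n)) = {(⟨n, h⟩ : Fin K)} from ?_]
  · exact Finset.card_singleton _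
  · ext i; simp [Fin.ext_iff]

lemma filter_truncMin_card_lt {K m : ℕ} (hm : m ≤ K) (t : Fin (m + 1)) (ht : (t : ℕ) < m) :
    (Finset.univ.filter (fun i : Fin K => truncMin m i = t)).card = 1 := by
  rw [show (Finset.univ.filter (fun i : Fin K => truncMin m i = t))
      = {(⟨(t : ℕ), lt_of_lt_of_le ht hm⟩ : Fin K)} from ?_]
  · exact Finset.card_singleton _
  · ext i
    simp only [Finset.mem_filter, Finset.mem_univ, true_and, Finset.mem_singleton,
      Fin.ext_iff, truncMin]
    omega

lemma card_filter_lt {K m : ℕ} (hm : m ≤ K) :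
    (Finset.univ.filter (fun i : Fin K => (i : ℕ) < m)).card = m := by
  rw [show (Finset.univ.filter (fun i : Fin K => (i : ℕ) < m))
      = Finset.map (Fin.castLEEmb hm) Finset.univ from ?_]
  · simp
  · ext i
    simp only [Finset.mem_filter, Finset.mem_univ, true_and, Finset.mem_map,
      Fin.castLEEmb]
    constructor
    · intro h; exact ⟨⟨i, h⟩, by simp [Fin.ext_iff, Fin.castLEEmb]⟩
    · rintro ⟨a, -, rfl⟩; simpa [Fin.castLEEmb] using a.isLt

lemma filter_truncMin_card_last {K m : ℕ} (hm : m ≤ K) :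
    (Finset.univ.filter (fun i : Fin K => truncMin m i = Fin.last m)).card = K - m := by
  have h1 : (Finset.univ.filter (fun i : Fin K => truncMin m i = Fin.last m))
      = Finset.univ.filter (fun i : Fin K => ¬ ((i : ℕ) < m)) := by
    ext i
    simp only [Finset.mem_filter, Finset.mem_univ, true_and, Fin.ext_iff, truncMin, Fin.last]
    omega
  have h3 := Finset.card_filter_add_card_filter_not
    (s := (Finset.univ : Finset (Fin K))) (p := fun i : Fin K => (i : ℕ) < m)
  rw [h1]
  have h4 := card_filter_lt hm
  simp only [Finset.card_univ, Fintype.card_fin] at h3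
  omega

lemma delta_fun_eq {l m : ℕ} {s₁ s₂ : Fin m} (hs : (s₁ : ℕ) < l)
    (h : (fun j : Fin l => if (s₁ : ℕ) = (j : ℕ) then (1 : Fin 2) else 0) =
         (fun j : Fin l => if (s₂ : ℕ) = (j : ℕ) then (1 : Fin 2) else 0)) :
    (s₁ : ℕ) = (s₂ : ℕ) := by
  have h1 := congrFun h ⟨(s₁ : ℕ), hs⟩
  by_contra hne
  rw [if_pos rfl, if_neg (fun h' => hne ((h' : (s₂:ℕ) = (s₁:ℕ))).symm)] at h1
  exact one_ne_zero h1

lemma psi_inj (l : ℕ) : Function.Injective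
    (fun t : Fin (l + 1) => fun j : Fin l => if (t : ℕ) = (j : ℕ) then (1 : Fin 2) else 0) := by
  intro t₁ t₂ h
  have ht₁ := t₁.isLt
  have ht₂ := t₂.isLt
  refine Fin.ext ?_
  rcases lt_or_ge (t₁ : ℕ) l with h1 | h1
  · exact delta_fun_eq h1 h
  · rcases lt_or_ge (t₂ : ℕ) l with h2 | h2
    · exact (delta_fun_eq h2 h.symm).symm
    · omega

lemma psi2_inj (l : ℕ) : Function.Injective
    (fun t : Fin (l + 2) => ((if (t : ℕ) = l then (1 : Fin 2) else 0),
      fun j : Fin l => if (t : ℕ) = (j : ℕ) then (1 : Fin 2) else 0)) := by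
  intro t₁ t₂ h
  have ht₁ := t₁.isLt
  have ht₂ := t₂.isLt
  have h1 : (if (t₁ : ℕ) = l then (1 : Fin 2) else 0) = (if (t₂ : ℕ) = l then (1 : Fin 2) else 0) :=
    congrArg Prod.fst h
  have h2 : (fun j : Fin l => if (t₁ : ℕ) = (j : ℕ) then (1 : Fin 2) else 0) =
      (fun j : Fin l => if (t₂ : ℕ) = (j : ℕ) then (1 : Fin 2) else 0) := congrArg Prod.snd h
  refine Fin.ext ?_
  have hl : ((t₁ : ℕ) = l ↔ (t₂ : ℕ) = l) := by
    constructor <;> intro he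
    · by_contra hc
      rw [if_pos he, if_neg hc] at h1; exact one_ne_zero (α := Fin 2) h1
    · by_contra hc
      rw [if_neg hc, if_pos he] at h1; exact one_ne_zero (α := Fin 2) h1.symm
  rcases lt_or_ge (t₁ : ℕ) l with ha | ha
  · exact delta_fun_eq ha h2
  · rcases lt_or_ge (t₂ : ℕ) l with hb | hb
    · exact (delta_fun_eq hb h2.symm).symm
    · omega


lemma negMulLog_one_sub_le {y : ℝ} (h0 : 0 ≤ y) (h1 : y < 1) :
    Real.negMulLog (1 - y) ≤ y := by
  have hz : 0 < 1 - y := by linarith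
  have h2 := Real.log_le_sub_one_of_pos (x := (1 - y)⁻¹) (by positivity)
  rw [Real.log_inv] at h2
  have h3 : (1 - y)⁻¹ - 1 = y / (1 - y) := by field_simp; ring
  have hlog_ge : -(y / (1 - y)) ≤ Real.log (1 - y) := by rw [← h3]; linarith
  have h4 : (1 - y) * (y / (1 - y)) = y := by field_simp
  rw [Real.negMulLog]
  nlinarith [mul_le_mul_of_nonneg_left hlog_ge hz.le]

lemma le_negMulLog_one_sub {y : ℝ} (h0 : 0 ≤ y) (h1 : y < 1) :
    y - y ^ 2 ≤ Real.negMulLog (1 - y) := by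
  have hz : 0 < 1 - y := by linarith
  have hlog_le : Real.log (1 - y) ≤ -y := by
    have := Real.log_le_sub_one_of_pos hz; linarith
  rw [Real.negMulLog]
  nlinarith [mul_le_mul_of_nonneg_left hlog_le hz.le]

lemma binEntropy_ge {x : ℝ} (hx : 0 < x) (hx2 : x ≤ 1 / 2) :
    x * Real.log 2 ≤ Real.binEntropy x := by
  rw [Real.binEntropy_eq_negMulLog_add_negMulLog_one_sub]
  have h1 : 0 ≤ Real.negMulLog (1 - x) := Real.negMulLog_nonneg (by linarith) (by linarith)
  have h2 : Real.log 2 ≤ Real.log x⁻¹ := by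
    apply Real.log_le_log (by norm_num)
    rw [le_inv_comm₀ (by norm_num) hx]
    linarith
  have h3 : Real.negMulLog x = x * Real.log x⁻¹ := by
    rw [Real.negMulLog, Real.log_inv]; ring
  nlinarith

end Helpers

set_option maxHeartbeats 2000000 in
/-- **Condition (9) of Theorem 3 for exact private search.** For each alphabet size `K ≥ 1`,
let `Δ` be a uniformly distributed random variable on `Fin K` and, identifying the values
`{1, …, l+1}` (for `l + 1 ≤ K`) with `{0, …, l} ⊆ ℕ`, let `W_j^{(K)}` be the indicator of
`Δ = j`. Then for every fixed `l`,
`I(W_{l+1}^{(K)} ; (W_1^{(K)}, …, W_l^{(K)})) / H₂(1/K) → 0` as `K → ∞`. -/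
theorem exact_search_mutualInfo_ratio_tendsto_zero
    (Ω : ℕ → Type*) [∀ K, MeasurableSpace (Ω K)] (P : ∀ K, Measure (Ω K))
    (hP : ∀ K, 1 ≤ K → IsProbabilityMeasure (P K))
    (Δ : ∀ K, Ω K → Fin K)
    (hunif : ∀ (K : ℕ) (x : Fin K), P K ((Δ K) ⁻¹' {x}) = (K : ENNReal)⁻¹)
    (l : ℕ) :
    Tendsto
      (fun K : ℕ =>
        mutualInfo (P K) (fun ω => if (Δ K ω : ℕ) = l then (1 : Fin 2) else 0)
            (fun ω => fun j : Fin l => if (Δ K ω : ℕ) = (j : ℕ) then (1 : Fin 2) else 0)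
          / Real.binEntropy (1 / K))
      atTop (nhds 0) := by
  set C : ℝ := ((l : ℝ) + 1) ^ 2 / Real.log 2 with hC
  apply squeeze_zero_norm' (a := fun K : ℕ => C * (1 / (K : ℝ)))
  · filter_upwards [eventually_ge_atTop (l + 2)] with K hK
    haveI : IsProbabilityMeasure (P K) := hP K (by omega)
    have hK0 : K ≠ 0 := by omega
    have hn0 : ((K : ℝ)) ≠ 0 := Nat.cast_ne_zero.2 hK0
    have hnl : ((l : ℝ)) + 2 ≤ (K : ℝ) := by exact_mod_cast hK
    have hlK : l < K := by omega
    -- entropy of X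
    have eX : entropy (P K) (fun ω => if (Δ K ω : ℕ) = l then (1 : Fin 2) else 0)
        = Real.negMulLog (((K - 1 : ℕ) : ℝ) / K) + Real.negMulLog (1 / (K : ℝ)) := by
      have h := entropy_comp (P K) hK0 (Δ K) (hunif K)
        (fun i : Fin K => if (i : ℕ) = l then (1 : Fin 2) else 0)
      rw [Fin.sum_univ_two] at h
      have hp1 : (Finset.univ.filter (fun i : Fin K =>
          (if (i : ℕ) = l then (1 : Fin 2) else 0) = 1)).card = 1 := by
        rw [show (Finset.univ.filter (fun i : Fin K =>
            (if (i : ℕ) = l then (1 : Fin 2) else 0) = 1))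
            = Finset.univ.filter (fun i : Fin K => (i : ℕ) = l) from ?_]
        · exact filter_coe_eq_card hlK
        · ext i; simp only [Finset.mem_filter, Finset.mem_univ, true_and]
          by_cases hc : (i : ℕ) = l <;> simp [hc]
      have hp0 : (Finset.univ.filter (fun i : Fin K =>
          (if (i : ℕ) = l then (1 : Fin 2) else 0) = 0)).card = K - 1 := by
        rw [show (Finset.univ.filter (fun i : Fin K =>
            (if (i : ℕ) = l then (1 : Fin 2) else 0) = 0))
            = Finset.univ.filter (fun i : Fin K => ¬ (i : ℕ) = l) from ?_]
        · have hsum := Finset.card_filter_add_card_filter_not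
            (s := (Finset.univ : Finset (Fin K))) (p := fun i : Fin K => (i : ℕ) = l)
          have h1 := filter_coe_eq_card hlK
          simp only [Finset.card_univ, Fintype.card_fin] at hsum
          omega
        · ext i; simp only [Finset.mem_filter, Finset.mem_univ, true_and]
          by_cases hc : (i : ℕ) = l <;> simp [hc]
      rw [hp0, hp1] at h
      calc (entropy (P K) (fun ω => if (Δ K ω : ℕ) = l then (1 : Fin 2) else 0))
          = Real.negMulLog (((K - 1 : ℕ) : ℝ) / K)
            + Real.negMulLog (((1 : ℕ) : ℝ) / K) := h
        _ = _ := by norm_num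
    -- entropy of Y
    have eY : entropy (P K)
        (fun ω => fun j : Fin l => if (Δ K ω : ℕ) = (j : ℕ) then (1 : Fin 2) else 0)
        = (l : ℝ) * Real.negMulLog (1 / (K : ℝ)) + Real.negMulLog (((K - l : ℕ) : ℝ) / K) := by
      have hYeq : (fun ω => fun j : Fin l => if (Δ K ω : ℕ) = (j : ℕ) then (1 : Fin 2) else 0)
          = (fun ω => (fun t : Fin (l + 1) => fun j : Fin l =>
              if (t : ℕ) = (j : ℕ) then (1 : Fin 2) else 0) (truncMin l (Δ K ω))) := by
        funext ω j
        have hj := j.isLt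
        exact if_congr (by simp only [truncMin, Fin.val_mk]; omega) rfl rfl
      calc (entropy (P K) (fun ω => fun j : Fin l => if (Δ K ω : ℕ) = (j : ℕ) then (1 : Fin 2) else 0))
          = entropy (P K) (fun ω => truncMin l (Δ K ω)) := by
            rw [hYeq]
            exact entropy_comp_injective (P K) (fun ω => truncMin l (Δ K ω)) _ (psi_inj l)
        _ = ∑ t : Fin (l + 1), Real.negMulLog
            (((Finset.univ.filter (fun i : Fin K => truncMin l i = t)).card : ℝ) / K) :=
            entropy_comp (P K) hK0 (Δ K) (hunif K) (truncMin l)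
        _ = _ := by
            rw [Fin.sum_univ_castSucc, filter_truncMin_card_last (show l ≤ K by omega)]
            rw [Finset.sum_congr rfl (fun j _ => by
              rw [filter_truncMin_card_lt (show l ≤ K by omega) _ (by simpa using j.isLt)])]
            rw [Finset.sum_const, Finset.card_univ, Fintype.card_fin]
            push_cast
            ring
    -- entropy of the pair
    have eZ : entropy (P K)
        (fun ω => ((if (Δ K ω : ℕ) = l then (1 : Fin 2) else 0),
          fun j : Fin l => if (Δ K ω : ℕ) = (j : ℕ) then (1 : Fin 2) else 0))
        = ((l : ℝ) + 1) * Real.negMulLog (1 / (K : ℝ))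
          + Real.negMulLog (((K - (l + 1) : ℕ) : ℝ) / K) := by
      have hZeq : (fun ω => ((if (Δ K ω : ℕ) = l then (1 : Fin 2) else 0),
            fun j : Fin l => if (Δ K ω : ℕ) = (j : ℕ) then (1 : Fin 2) else 0))
          = (fun ω => (fun t : Fin (l + 2) => ((if (t : ℕ) = l then (1 : Fin 2) else 0),
              fun j : Fin l => if (t : ℕ) = (j : ℕ) then (1 : Fin 2) else 0))
              (truncMin (l + 1) (Δ K ω))) := by
        funext ω
        refine congrArg₂ Prod.mk ?_ ?_
        · exact if_congr (by simp only [truncMin, Fin.val_mk]; omega) rfl rfl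
        · funext j
          have hj := j.isLt
          exact if_congr (by simp only [truncMin, Fin.val_mk]; omega) rfl rfl
      calc (entropy (P K) (fun ω => ((if (Δ K ω : ℕ) = l then (1 : Fin 2) else 0), fun j : Fin l => if (Δ K ω : ℕ) = (j : ℕ) then (1 : Fin 2) else 0)))
          = entropy (P K) (fun ω => truncMin (l + 1) (Δ K ω)) := by
            rw [hZeq]
            exact entropy_comp_injective (P K) (fun ω => truncMin (l + 1) (Δ K ω)) _ (psi2_inj l)
        _ = ∑ t : Fin (l + 2), Real.negMulLog
            (((Finset.univ.filter (fun i : Fin K => truncMin (l + 1) i = t)).card : ℝ) / K) :=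
            entropy_comp (P K) hK0 (Δ K) (hunif K) (truncMin (l + 1))
        _ = _ := by
            rw [Fin.sum_univ_castSucc, filter_truncMin_card_last (show l + 1 ≤ K by omega)]
            rw [Finset.sum_congr rfl (fun t _ => by
              rw [filter_truncMin_card_lt (show l + 1 ≤ K by omega) _
                (by simpa using t.isLt)])]
            rw [Finset.sum_const, Finset.card_univ, Fintype.card_fin]
            push_cast
            ring
    -- mutual information
    have hM : mutualInfo (P K) (fun ω => if (Δ K ω : ℕ) = l then (1 : Fin 2) else 0)
        (fun ω => fun j : Fin l => if (Δ K ω : ℕ) = (j : ℕ) then (1 : Fin 2) else 0)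
        = Real.negMulLog (((K - 1 : ℕ) : ℝ) / K) + Real.negMulLog (((K - l : ℕ) : ℝ) / K)
          - Real.negMulLog (((K - (l + 1) : ℕ) : ℝ) / K) := by
      unfold mutualInfo
      beta_reduce
      rw [eX, eY, eZ]
      ring
    -- convert to 1 - y form
    have c1 : (((K - 1 : ℕ) : ℝ)) / K = 1 - 1 / (K : ℝ) := by
      rw [Nat.cast_sub (by omega), sub_div, div_self hn0]; norm_num
    have c2 : (((K - l : ℕ) : ℝ)) / K = 1 - (l : ℝ) / K := by
      rw [Nat.cast_sub (by omega), sub_div, div_self hn0]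
    have c3 : (((K - (l + 1) : ℕ) : ℝ)) / K = 1 - ((l : ℝ) + 1) / K := by
      rw [Nat.cast_sub (by omega), sub_div, div_self hn0]; push_cast; ring
    rw [hM, c1, c2, c3]
    -- bounds
    have hnpos : (0 : ℝ) < K := by positivity
    have hy1a : (0 : ℝ) ≤ 1 / (K : ℝ) := by positivity
    have hy1b : 1 / (K : ℝ) < 1 := by rw [div_lt_one hnpos]; linarith
    have hy2a : (0 : ℝ) ≤ (l : ℝ) / K := by positivity
    have hy2b : (l : ℝ) / K < 1 := by rw [div_lt_one hnpos]; linarith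
    have hy3a : (0 : ℝ) ≤ ((l : ℝ) + 1) / K := by positivity
    have hy3b : ((l : ℝ) + 1) / K < 1 := by rw [div_lt_one hnpos]; linarith
    have b1u := negMulLog_one_sub_le hy1a hy1b
    have b1l := le_negMulLog_one_sub hy1a hy1b
    have b2u := negMulLog_one_sub_le hy2a hy2b
    have b2l := le_negMulLog_one_sub hy2a hy2b
    have b3u := negMulLog_one_sub_le hy3a hy3b
    have b3l := le_negMulLog_one_sub hy3a hy3b
    have hsum : 1 / (K : ℝ) + (l : ℝ) / K = ((l : ℝ) + 1) / K := by ring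
    set I : ℝ := Real.negMulLog (1 - 1 / (K : ℝ)) + Real.negMulLog (1 - (l : ℝ) / K)
      - Real.negMulLog (1 - ((l : ℝ) + 1) / K) with hI
    have e2 : ((l : ℝ) / K) = (l : ℝ) * (1 / (K : ℝ)) := by ring
    have e3 : (((l : ℝ) + 1) / K) = ((l : ℝ) + 1) * (1 / (K : ℝ)) := by ring
    have e2sq : ((l : ℝ) / K) ^ 2 = ((l : ℝ)) ^ 2 * (1 / (K : ℝ)) ^ 2 := by ring
    have e3sq : (((l : ℝ) + 1) / K) ^ 2 = ((l : ℝ) + 1) ^ 2 * (1 / (K : ℝ)) ^ 2 := by ring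
    have habs : |I| ≤ ((l : ℝ) + 1) ^ 2 * (1 / (K : ℝ)) ^ 2 := by
      rw [abs_le, hI]
      constructor
      · nlinarith [mul_nonneg (Nat.cast_nonneg (α := ℝ) l) (sq_nonneg (1 / (K : ℝ))),
          sq_nonneg (1 / (K : ℝ)), b1l, b2l, b3u, hsum, e2sq, e3sq, e2, e3]
      · nlinarith [mul_nonneg (Nat.cast_nonneg (α := ℝ) l) (sq_nonneg (1 / (K : ℝ))),
          sq_nonneg (1 / (K : ℝ)), b1u, b2u, b3l, hsum, e2sq, e3sq, e2, e3]
    have hx2 : 1 / (K : ℝ) ≤ 1 / 2 := by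
      apply one_div_le_one_div_of_le (by norm_num)
      linarith
    have hHlb := binEntropy_ge (show (0:ℝ) < 1 / K by positivity) hx2
    have hlog2 : (0 : ℝ) < Real.log 2 := Real.log_pos (by norm_num)
    have hHpos : (0 : ℝ) < Real.binEntropy (1 / (K : ℝ)) := by
      calc (0 : ℝ) < (1 / (K : ℝ)) * Real.log 2 := by positivity
        _ ≤ _ := hHlb
    rw [Real.norm_eq_abs, abs_div, abs_of_pos hHpos]
    calc |I| / Real.binEntropy (1 / (K : ℝ))
        ≤ (((l : ℝ) + 1) ^ 2 * (1 / (K : ℝ)) ^ 2) / ((1 / (K : ℝ)) * Real.log 2) :=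
          div_le_div₀ (by positivity) habs (by positivity) hHlb
      _ = C * (1 / (K : ℝ)) := by
          rw [hC]
          field_simp
  · have h := (tendsto_one_div_atTop_nhds_zero_nat).const_mul C
    simpa using h
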